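/- Let A be an abelian category, (U,V) a t-structure on D^b(A) with heart H(U), and let f: A → B[n] be a morphism in D^b(A) with A,B ∈ H(U) and n ≥ 2. Then: (i) there exists an epimorphism C → A in H(U) such that the composite C → A → B[n] is zero if and only if there exists A_1 ∈ H(U) and a factorization of f as A → A_1[1] → B[n]; and (ii) there exists a monomorphism B → C in H(U) such that the composite A → B[n] → C[n] is zero if and only if there exists A_{n-1} ∈ H(U) and a factorization of f as A → A_{n-1}[n-1] → B[n]. -/

import Mathlib

/-!
Common definitions for formalizing statements from
"Derived equivalences for hereditary algebras: the role of the Serre functor".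
-/

noncomputable section

open CategoryTheory CategoryTheory.Limits CategoryTheory.Pretriangulated

universe w₁ v₁ u₁ w v u

namespace Paper

variable (D : Type u) [Category.{v} D]

/-- An object of a preadditive category is indecomposable if it is nonzero and any
biproduct decomposition `X ≅ Y ⊞ Z` has `Y = 0` or `Z = 0` (expressed elementarily). -/
def IndecomposableObj [Preadditive D] (X : D) : Prop :=
  ¬ IsZero X ∧
    ∀ (Y Z : D) (i : Y ⟶ X) (p : X ⟶ Y) (j : Z ⟶ X) (q : X ⟶ Z),
      i ≫ p = 𝟙 Y → j ≫ q = 𝟙 Z → i ≫ q = 0 → j ≫ p = 0 → p ≫ i + q ≫ j = 𝟙 X →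
        IsZero Y ∨ IsZero Z

/-- A morphism `f : A ⟶ C` is right minimal if any `h : A ⟶ A` with `h ≫ f = f`
is an automorphism. -/
def RightMinimal {A C : D} (f : A ⟶ C) : Prop :=
  ∀ h : A ⟶ A, h ≫ f = f → IsIso h

/-- The equivalence relation `f ∼_C g` on morphisms with target `C`. -/
def EquivOver {A B C : D} (f : A ⟶ C) (g : B ⟶ C) : Prop :=
  (∃ h₁ : A ⟶ B, h₁ ≫ g = f) ∧ (∃ h₂ : B ⟶ A, h₂ ≫ f = g)

section Serre

variable (k : Type u₁) [Field k] [Preadditive D] [CategoryTheory.Linear k D]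

/-- A Serre functor on a `k`-linear category `D`: an autoequivalence `F` together with
isomorphisms `Hom(X,Y) ≅ Hom(Y, F X)*`, natural in `X` and `Y`. -/
structure SerreFunctor where
  F : D ⥤ D
  isEquivalence : F.IsEquivalence
  η : ∀ X Y : D, (X ⟶ Y) ≃ₗ[k] Module.Dual k (Y ⟶ F.obj X)
  naturality_left : ∀ ⦃X' X Y : D⦄ (u : X' ⟶ X) (f : X ⟶ Y) (g : Y ⟶ F.obj X'),
    η X' Y (u ≫ f) g = η X Y f (g ≫ F.map u)
  naturality_right : ∀ ⦃X Y Y' : D⦄ (f : X ⟶ Y) (v : Y ⟶ Y') (g : Y' ⟶ F.obj X),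
    η X Y' (f ≫ v) g = η X Y f (v ≫ g)

/-- A Serre functor on the strictly full subcategory of `D` whose objects are `S`;
the Hom-spaces are the ambient ones. -/
structure SerreFunctorOn (S : Set D) where
  F : ObjectProperty.FullSubcategory (· ∈ S) ⥤ ObjectProperty.FullSubcategory (· ∈ S)
  isEquivalence : F.IsEquivalence
  η : ∀ X Y : ObjectProperty.FullSubcategory (· ∈ S),
    (X.obj ⟶ Y.obj) ≃ₗ[k] Module.Dual k (Y.obj ⟶ (F.obj X).obj)
  naturality_left : ∀ ⦃X' X Y : ObjectProperty.FullSubcategory (· ∈ S)⦄ (u : X' ⟶ X) (f : X.obj ⟶ Y.obj)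
      (g : Y.obj ⟶ (F.obj X').obj),
    η X' Y ((u.hom) ≫ f) g
      = η X Y f (g ≫ (F.map u).hom)
  naturality_right : ∀ ⦃X Y Y' : ObjectProperty.FullSubcategory (· ∈ S)⦄ (f : X.obj ⟶ Y.obj) (v : Y ⟶ Y')
      (g : Y'.obj ⟶ (F.obj X).obj),
    η X Y' (f ≫ v.hom) g = η X Y f (v.hom ≫ g)

end Serre

section Triangulated

variable [HasZeroObject D] [Preadditive D] [HasShift D ℤ]
  [∀ n : ℤ, (shiftFunctor D n).Additive] [Pretriangulated D]

/-- A t-structure on the strictly full (pretriangulated) subcategory of `D` with objects `S`: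
a pair `(U, V)` of strictly full subcategories with `U[1] ⊆ U`, `V ⊆ V[1]`,
`Hom(U[1], V) = 0`, and truncation triangles for every object of `S`. -/
structure TStructureOn (S : Set D) where
  U : Set D
  V : Set D
  U_subset : U ⊆ S
  V_subset : V ⊆ S
  U_iso : ∀ ⦃X Y : D⦄, (X ≅ Y) → X ∈ U → Y ∈ U
  V_iso : ∀ ⦃X Y : D⦄, (X ≅ Y) → X ∈ V → Y ∈ V
  U_shift : ∀ ⦃X : D⦄, X ∈ U → X⟦(1 : ℤ)⟧ ∈ U
  V_shift : ∀ ⦃X : D⦄, X ∈ V → X⟦(-1 : ℤ)⟧ ∈ V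
  hom_zero : ∀ ⦃X Y : D⦄, X ∈ U → Y ∈ V → ∀ f : X⟦(1 : ℤ)⟧ ⟶ Y, f = 0
  exists_triangle : ∀ C₀ ∈ S, ∃ (X Y : D) (_ : X ∈ U) (_ : Y⟦(1 : ℤ)⟧ ∈ V)
    (f : X ⟶ C₀) (g : C₀ ⟶ Y) (h : Y ⟶ X⟦(1 : ℤ)⟧), Triangle.mk f g h ∈ distTriang D

namespace TStructureOn

variable {D} {S : Set D} (t : TStructureOn D S)

/-- The heart of a t-structure, as a set of objects. -/
def heartSet : Set D := t.U ∩ t.V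

/-- The heart of a t-structure, as a (full sub)category. -/
abbrev Heart := ObjectProperty.FullSubcategory (· ∈ t.heartSet)

/-- The inclusion of the heart into the ambient category. -/
def heartIncl : t.Heart ⥤ D := ObjectProperty.ι _

/-- A t-structure is bounded if every object of the (sub)category lies in some shift
of the aisle and in some shift of the coaisle. -/
def IsBounded : Prop :=
  (∀ X ∈ S, ∃ n : ℤ, X⟦n⟧ ∈ t.U) ∧ (∀ X ∈ S, ∃ n : ℤ, X⟦n⟧ ∈ t.V)

end TStructureOn

/-- The aisle `U` of a t-structure is stable under a Serre functor on the ambient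
(sub)category. -/
def SerreStable (k : Type u₁) [Field k] [CategoryTheory.Linear k D] {S : Set D}
    (Se : SerreFunctorOn D k S) (U : Set D) : Prop :=
  ∀ X : ObjectProperty.FullSubcategory (· ∈ S), X.obj ∈ U → (Se.F.obj X).obj ∈ U

/-- A preaisle in the strictly full subcategory of `D` with objects `S`: a strictly full
subcategory closed under suspension and extensions. -/
def IsPreaisleOn (S P : Set D) : Prop :=
  P ⊆ S ∧ (∀ ⦃X Y : D⦄, (X ≅ Y) → X ∈ P → Y ∈ P) ∧ (∀ ⦃X : D⦄, X ∈ P → X⟦(1 : ℤ)⟧ ∈ P) ∧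
    (∀ T : Triangle D, (T ∈ distTriang D) → T.obj₁ ∈ P → T.obj₃ ∈ P → T.obj₂ ∈ S → T.obj₂ ∈ P)

/-- The smallest preaisle (in the subcategory with objects `S`) containing `E`. -/
def preaisleGenOn (S : Set D) (E : D) : Set D :=
  ⋂₀ {P : Set D | IsPreaisleOn D S P ∧ E ∈ P}

/-- A thick (triangulated, retract-closed) subcategory of the subcategory with objects `S`. -/
def IsThickOn (S P : Set D) : Prop :=
  P ⊆ S ∧ (∀ ⦃X Y : D⦄, (X ≅ Y) → X ∈ P → Y ∈ P) ∧
    (∀ ⦃X : D⦄, X ∈ P → X⟦(1 : ℤ)⟧ ∈ P ∧ X⟦(-1 : ℤ)⟧ ∈ P) ∧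
    (∀ T : Triangle D, (T ∈ distTriang D) → T.obj₁ ∈ P → T.obj₃ ∈ P → T.obj₂ ∈ S → T.obj₂ ∈ P) ∧
    (∀ ⦃X Y : D⦄, X ∈ P → Y ∈ S → ∀ (i : Y ⟶ X) (r : X ⟶ Y), i ≫ r = 𝟙 Y → Y ∈ P)

/-- The smallest thick subcategory (of the subcategory with objects `S`) containing `E`. -/
def thickGenOn (S : Set D) (E : D) : Set D :=
  ⋂₀ {P : Set D | IsThickOn D S P ∧ E ∈ P}

/-- `E` is a partial silting object: `Hom(E, E[n]) = 0` for `n > 0`. -/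
def IsPartialSilting (S : Set D) (E : D) : Prop :=
  E ∈ S ∧ ∀ n : ℤ, 0 < n → ∀ f : E ⟶ E⟦n⟧, f = 0

/-- `E` is a silting object: partial silting and it generates the category as a thick
subcategory. -/
def IsSilting (S : Set D) (E : D) : Prop :=
  IsPartialSilting D S E ∧ thickGenOn D S E = S

/-- `E` is a partial tilting object: `Hom(E, E[n]) = 0` for `n ≠ 0`. -/
def IsPartialTilting (S : Set D) (E : D) : Prop :=
  E ∈ S ∧ ∀ n : ℤ, n ≠ 0 → ∀ f : E ⟶ E⟦n⟧, f = 0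

/-- `E` is a tilting object: partial tilting and it generates the category as a thick
subcategory. -/
def IsTilting (S : Set D) (E : D) : Prop :=
  IsPartialTilting D S E ∧ thickGenOn D S E = S

/-- The aisle `U` of the t-structure `t` is finitely generated: it is the smallest
preaisle containing some partial silting object. -/
def TStructureOn.FinitelyGenerated {D : Type u} [Category.{v} D] [HasZeroObject D]
    [Preadditive D] [HasShift D ℤ] [∀ n : ℤ, (shiftFunctor D n).Additive] [Pretriangulated D]
    {S : Set D} (t : TStructureOn D S) : Prop :=
  ∃ E : D, IsPartialSilting D S E ∧ t.U = preaisleGenOn D S E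

/-- A torsion class in the abelian category whose objects are `H` (the heart of a
t-structure on `D`, where short exact sequences correspond to distinguished triangles):
a strictly full subcategory closed under extensions and quotients, such that the
inclusion admits a right adjoint (expressed pointwise). -/
def IsTorsionClassOn (H T : Set D) : Prop :=
  T ⊆ H ∧ (∀ ⦃X Y : D⦄, (X ≅ Y) → X ∈ T → Y ∈ T) ∧
    (∀ Tr : Triangle D, (Tr ∈ distTriang D) → Tr.obj₁ ∈ T → Tr.obj₃ ∈ T → Tr.obj₂ ∈ H →
      Tr.obj₂ ∈ T) ∧
    (∀ Tr : Triangle D, (Tr ∈ distTriang D) → Tr.obj₁ ∈ H → Tr.obj₂ ∈ T → Tr.obj₃ ∈ H →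
      Tr.obj₃ ∈ T) ∧
    (∀ X ∈ H, ∃ (TX : D) (_ : TX ∈ T) (c : TX ⟶ X),
      ∀ (Y : D), Y ∈ T → ∀ φ : Y ⟶ X, ∃! ψ : Y ⟶ TX, ψ ≫ c = φ)

/-- A tilting torsion class: a torsion class such that every object of the heart embeds
(in the heart) into an object of the torsion class. -/
def IsTiltingTorsionClassOn (H T : Set D) : Prop :=
  IsTorsionClassOn D H T ∧ ∀ (X : D) (hX : X ∈ H), ∃ (T' : D) (_ : T' ∈ T) (hT'H : T' ∈ H)
    (f : X ⟶ T'), Mono (ObjectProperty.homMk f : (⟨X, hX⟩ : ObjectProperty.FullSubcategory (· ∈ H)) ⟶ ⟨T', hT'H⟩)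

end Triangulated

section Db

variable (A : Type u) [Category.{v} A] [Abelian A] [HasDerivedCategory.{w} A]

/-- The objects of the bounded derived category `D^b(A)`, i.e. the objects of the
derived category of `A` with bounded cohomology. -/
def Bdd : Set (DerivedCategory A) :=
  {X | ∃ a b : ℤ, ∀ n : ℤ, (n < a ∨ b < n) →
    IsZero ((DerivedCategory.homologyFunctor A n).obj X)}

lemma shift_mem_Bdd {X : DerivedCategory A} (hX : X ∈ Bdd A) (m : ℤ) : X⟦m⟧ ∈ Bdd A := by
  obtain ⟨a, b, h⟩ := hX
  refine ⟨a - m, b - m, fun n hn => ?_⟩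
  exact IsZero.of_iso (h (m + n) (by omega))
    (((DerivedCategory.homologyFunctor A 0).shiftIso m n (m + n) rfl).app X)

/-- The canonical functor `A ⥤ D^b(A) ⊆ D(A)`, sending an object to the corresponding
complex concentrated in degree `0`. -/
def singleQ : A ⥤ DerivedCategory A :=
  HomologicalComplex.single A (ComplexShape.up ℤ) 0 ⋙ DerivedCategory.Q

lemma singleQ_obj_mem_Bdd (M : A) : (singleQ A).obj M ∈ Bdd A := by
  refine ⟨0, 0, fun n hn => ?_⟩
  refine IsZero.of_iso ?_
    ((DerivedCategory.homologyFunctorFactors A n).app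
      ((HomologicalComplex.single A (ComplexShape.up ℤ) 0).obj M))
  exact HomologicalComplex.isZero_single_obj_homology _ _ M n (by omega)

/-- The bounded derived category of `A`, as the full subcategory of `D(A)` whose objects
have bounded cohomology. -/
abbrev BddCat := ObjectProperty.FullSubcategory (· ∈ Bdd A)

/-- The suspension functor on the bounded derived category. -/
def bddShift : BddCat A ⥤ BddCat A :=
  ObjectProperty.lift _ (ObjectProperty.ι _ ⋙ shiftFunctor (DerivedCategory A) (1 : ℤ))
    (fun X => shift_mem_Bdd A X.property 1)

/-- The canonical functor `A ⥤ D^b(A)`. -/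
def bddSingle : A ⥤ BddCat A :=
  ObjectProperty.lift _ (singleQ A) (singleQ_obj_mem_Bdd A)

/-- `A` has global dimension at most `d`: `Ext^n(M, N) = 0` for all `n > d`
(expressed via morphisms in the derived category). -/
def HasGlobalDimensionLE (d : ℕ) : Prop :=
  ∀ (M N : A) (n : ℤ), (d : ℤ) < n → ∀ f : (singleQ A).obj M ⟶ ((singleQ A).obj N)⟦n⟧, f = 0

/-- An abelian category is hereditary if `Ext²(-, -) = 0` (equivalently, it has global
dimension at most `1`). -/
def IsHereditaryCat : Prop := HasGlobalDimensionLE A 1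

/-- `A` is Ext-finite over `k`: all Ext-spaces between objects of `A` are
finite-dimensional over `k`. -/
def ExtFinite (k : Type u₁) [Field k] [CategoryTheory.Linear k (DerivedCategory A)] : Prop :=
  ∀ (M N : A) (n : ℤ),
    FiniteDimensional k ((singleQ A).obj M ⟶ ((singleQ A).obj N)⟦n⟧)

/-- The Grothendieck group `K₀` of an abelian category. -/
def K0 : Type u :=
  FreeAbelianGroup (Quotient (isIsomorphicSetoid A)) ⧸
    AddSubgroup.closure {x | ∃ Sc : ShortComplex A, Sc.ShortExact ∧
      x = FreeAbelianGroup.of (Quotient.mk (isIsomorphicSetoid A) Sc.X₂)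
        - FreeAbelianGroup.of (Quotient.mk (isIsomorphicSetoid A) Sc.X₁)
        - FreeAbelianGroup.of (Quotient.mk (isIsomorphicSetoid A) Sc.X₃)}

/-- The class of an object of `A` in `K₀(A)`. -/
def K0cls (M : A) : K0 A :=
  QuotientAddGroup.mk (FreeAbelianGroup.of (Quotient.mk (isIsomorphicSetoid A) M))

/-- `D^b(A)` is discrete: for every function `v : ℤ → K₀(A)` there are only finitely many
isomorphism classes of bounded objects `X` with `[H^i(X)] = v i` for all `i`. -/
def DerivedDiscrete : Prop :=
  ∀ v : ℤ → K0 A,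
    Set.Finite {c : Quotient (isIsomorphicSetoid (BddCat A)) |
      ∃ X : BddCat A, Quotient.mk (isIsomorphicSetoid (BddCat A)) X = c ∧
        ∀ i : ℤ, K0cls A ((DerivedCategory.homologyFunctor A i).obj X.obj) = v i}

end Db

/-- The property that the inclusion `ι : H ⟶ D` of a (heart-like) abelian subcategory
of the triangulated category `D` lifts to a triangulated equivalence from `D^b(H)` to
the strictly full subcategory of `D` with objects `S`. -/
structure DbEquivalence (H : Type u₁) [Category.{v₁} H] [Abelian H] [HasDerivedCategory.{w₁} H]
    (D : Type u) [Category.{v} D] [HasZeroObject D] [Preadditive D] [HasShift D ℤ]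
    [∀ n : ℤ, (shiftFunctor D n).Additive] [Pretriangulated D]
    (S : Set D) (ι : H ⥤ D) where
  /-- the underlying functor `D^b(H) ⥤ D` -/
  F : BddCat H ⥤ D
  mem : ∀ X : BddCat H, F.obj X ∈ S
  /-- `F` commutes with the suspension -/
  commShift : bddShift H ⋙ F ≅ F ⋙ shiftFunctor D (1 : ℤ)
  /-- `F` sends distinguished triangles of `D^b(H)` to distinguished triangles of `D` -/
  map_distinguished : ∀ (T : Triangle (DerivedCategory H)) (_ : T ∈ distTriang (DerivedCategory H))
      (h₁ : T.obj₁ ∈ Bdd H) (h₂ : T.obj₂ ∈ Bdd H) (h₃ : T.obj₃ ∈ Bdd H),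
      Triangle.mk (F.map (X := ⟨T.obj₁, h₁⟩) (Y := ⟨T.obj₂, h₂⟩) (ObjectProperty.homMk T.mor₁))
        (F.map (X := ⟨T.obj₂, h₂⟩) (Y := ⟨T.obj₃, h₃⟩) (ObjectProperty.homMk T.mor₂))
        (F.map (X := ⟨T.obj₃, h₃⟩) (Y := (bddShift H).obj ⟨T.obj₁, h₁⟩) (ObjectProperty.homMk T.mor₃) ≫
          commShift.hom.app ⟨T.obj₁, h₁⟩) ∈ distTriang D
  faithful : F.Faithful
  full : F.Full
  /-- `F` is essentially surjective onto the subcategory with objects `S` -/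
  essSurj : ∀ Y : D, Y ∈ S → ∃ X : BddCat H, Nonempty (F.obj X ≅ Y)
  /-- `F` extends the inclusion `ι` of `H` -/
  extends_incl : bddSingle H ⋙ F ≅ ι

section Algebra

/-- A ring `Γ` has global dimension at most `d`. -/
def RingGlobalDimLE (Γ : Type u) [Ring Γ] (d : ℕ) : Prop :=
  letI : HasDerivedCategory (ModuleCat.{u} Γ) := HasDerivedCategory.standard _
  HasGlobalDimensionLE (ModuleCat.{u} Γ) d

/-- The category `mod Λ` of finite-dimensional (equivalently, finitely generated) right
modules over a finite-dimensional algebra `Λ`, i.e. finitely generated left modules over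
`Λᵐᵒᵖ`. -/
abbrev ModA (Λ : Type u) [Ring Λ] := FGModuleCat Λᵐᵒᵖ

/-- A finite-dimensional algebra is hereditary if the category of its right modules is
hereditary, i.e. if `Λ` has right global dimension at most 1. -/
def HereditaryAlg (Λ : Type u) [Ring Λ] : Prop := RingGlobalDimLE Λᵐᵒᵖ 1

end Algebra

end Paper

namespace Paper

/-- Composite of a chain of morphisms `Z 0 ⟶ Z 1 ⟶ ⋯ ⟶ Z n`. -/
def chainComp {D : Type u} [Category.{v} D] (Z : ℕ → D) (g : ∀ i : ℕ, Z i ⟶ Z (i + 1)) :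
    ∀ n : ℕ, Z 0 ⟶ Z n
  | 0 => 𝟙 (Z 0)
  | n + 1 => chainComp Z g n ≫ g n

variable (A : Type u) [Category.{v} A] [Abelian A] [HasDerivedCategory.{w} A]

/-- The aisle of the standard t-structure on `D^b(A)`: bounded complexes with vanishing
cohomology in positive degrees. -/
def stdAisle : Set (DerivedCategory A) :=
  {X | X ∈ Bdd A ∧ ∀ n : ℤ, 0 < n → IsZero ((DerivedCategory.homologyFunctor A n).obj X)}

/-- The coaisle of the standard t-structure on `D^b(A)`: bounded complexes with vanishing
cohomology in negative degrees. -/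
def stdCoaisle : Set (DerivedCategory A) :=
  {X | X ∈ Bdd A ∧ ∀ n : ℤ, n < 0 → IsZero ((DerivedCategory.homologyFunctor A n).obj X)}

end Paper

section Statement5Aux

open Paper

variable {C : Type u} [Category.{v} C] [HasZeroObject C] [Preadditive C] [HasShift C ℤ]
  [∀ n : ℤ, (shiftFunctor C n).Additive] [Pretriangulated C]
  {S : Set C} (t : TStructureOn C S)

lemma aux5_heart_iso {X Y : C} (e : X ≅ Y) (h : X ∈ t.heartSet) : Y ∈ t.heartSet :=
  ⟨t.U_iso e h.1, t.V_iso e h.2⟩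

lemma aux5_U_shift_nonneg {P : C} (hP : P ∈ t.U) {c : ℤ} (hc : 0 ≤ c) : P⟦c⟧ ∈ t.U := by
  obtain ⟨k, rfl⟩ := Int.eq_ofNat_of_zero_le hc
  clear hc
  induction k with
  | zero => exact t.U_iso ((shiftFunctorZero C ℤ).symm.app P ≪≫ eqToIso (by norm_num)) hP
  | succ k ih =>
      exact t.U_iso ((shiftFunctorAdd' C (k : ℤ) 1 ((k + 1 : ℕ) : ℤ) (by omega)).symm.app P)
        (t.U_shift ih)

lemma aux5_V_shift_nonpos {Q : C} (hQ : Q ∈ t.V) {c : ℤ} (hc : c ≤ 0) : Q⟦c⟧ ∈ t.V := by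
  have h : ∀ d : ℕ, Q⟦-(d : ℤ)⟧ ∈ t.V := by
    intro d
    induction d with
    | zero => exact t.V_iso ((shiftFunctorZero C ℤ).symm.app Q ≪≫ eqToIso (by norm_num)) hQ
    | succ d ih =>
        exact t.V_iso
          ((shiftFunctorAdd' C (-(d : ℤ)) (-1) (-((d + 1 : ℕ) : ℤ)) (by omega)).symm.app Q)
          (t.V_shift ih)
  have h2 := h (-c).toNat
  rw [Int.toNat_of_nonneg (by omega), neg_neg] at h2
  exact h2

lemma aux5_homZ {P Q : C} (hP : P ∈ t.U) (hQ : Q ∈ t.V) {a b : ℤ} (hab : b < a)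
    (g : P⟦a⟧ ⟶ Q⟦b⟧) : g = 0 := by
  have hmem : P⟦a - b - 1⟧ ∈ t.U := aux5_U_shift_nonneg t hP (by omega)
  have α : P⟦a - b - 1⟧⟦(1:ℤ)⟧ ≅ P⟦a⟧⟦-b⟧ :=
    (shiftFunctorAdd' C (a - b - 1) 1 (a - b) (by omega)).symm.app P ≪≫
      (shiftFunctorAdd' C a (-b) (a - b) (by omega)).app P
  have β : Q⟦b⟧⟦-b⟧ ≅ Q :=
    (shiftFunctorAdd' C b (-b) 0 (by omega)).symm.app Q ≪≫ (shiftFunctorZero C ℤ).app Q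
  have h0 : α.hom ≫ g⟦(-b : ℤ)⟧' ≫ β.hom = 0 := t.hom_zero hmem hQ _
  have h1 : g⟦(-b : ℤ)⟧' = 0 := by
    rw [← cancel_epi α.hom, ← cancel_mono β.hom]
    simpa using h0
  exact (shiftFunctor C (-b)).map_injective (by rw [h1, Functor.map_zero])

lemma aux5_homZ₁ {P Q : C} (hP : P ∈ t.U) (hQ : Q ∈ t.V) {a : ℤ} (ha : 0 < a)
    (g : P⟦a⟧ ⟶ Q) : g = 0 := by
  apply (cancel_mono ((shiftFunctorZero C ℤ).inv.app Q)).1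
  rw [zero_comp]
  exact aux5_homZ t hP hQ (by omega) _

lemma aux5_homZ₂ {P Q : C} (hP : P ∈ t.U) (hQ : Q ∈ t.V) {b : ℤ} (hb : b < 0)
    (g : P ⟶ Q⟦b⟧) : g = 0 := by
  apply (cancel_epi ((shiftFunctorZero C ℤ).hom.app P)).1
  rw [comp_zero]
  exact aux5_homZ t hP hQ (by omega) _

lemma aux5_homZ₃ {P Q : C} (hP : P ∈ t.U) (hQ : Q⟦(1:ℤ)⟧ ∈ t.V) (g : P ⟶ Q) : g = 0 := by
  apply (shiftFunctor C (1:ℤ)).map_injective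
  rw [Functor.map_zero]
  exact t.hom_zero hP hQ _

lemma aux5_homZ₅ {P Q : C} (hP : P ∈ t.U) (hQ : Q⟦(1:ℤ)⟧ ∈ t.V) {a b : ℤ} (hab : b ≤ a)
    (g : P⟦a⟧ ⟶ Q⟦b⟧) : g = 0 := by
  apply (cancel_mono ((shiftFunctorAdd' C 1 (b - 1) b (by omega)).hom.app Q)).1
  rw [zero_comp]
  exact aux5_homZ t hP hQ (by omega) _

lemma aux5_homZ₆ {P Q : C} (hP : P ∈ t.U) (hQ : Q⟦(1:ℤ)⟧ ∈ t.V) {b : ℤ} (hb : b ≤ 0)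
    (g : P ⟶ Q⟦b⟧) : g = 0 := by
  apply (cancel_epi ((shiftFunctorZero C ℤ).hom.app P)).1
  rw [comp_zero]
  exact aux5_homZ₅ t hP hQ (by omega) _

lemma aux5_mem_U {E : C} (hE : E ∈ S)
    (h : ∀ (Y : C), Y⟦(1:ℤ)⟧ ∈ t.V → ∀ g : E ⟶ Y, g = 0) : E ∈ t.U := by
  obtain ⟨Xu, Yv, hX, hY, a, b, c, hT⟩ := t.exists_triangle E hE
  have hb : b = 0 := h Yv hY b
  have hz : IsZero Yv := by
    obtain ⟨ψ, hψ⟩ := Triangle.yoneda_exact₂ _ (rot_of_distTriang _ hT) (𝟙 Yv)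
      (by change b ≫ 𝟙 Yv = 0; rw [hb, zero_comp])
    have hψ0 : ψ = 0 := aux5_homZ₃ t (t.U_shift hX) hY ψ
    rw [IsZero.iff_id_eq_zero, hψ, hψ0]; exact comp_zero
  have : IsIso a := (Triangle.isZero₃_iff_isIso₁ _ hT).1 hz
  exact t.U_iso (asIso a) hX

lemma aux5_mem_V (hSshift : ∀ ⦃X : C⦄, X ∈ S → ∀ m : ℤ, X⟦m⟧ ∈ S) {E : C} (hE : E ∈ S)
    (h : ∀ (X : C), X ∈ t.U → ∀ g : X⟦(1:ℤ)⟧ ⟶ E, g = 0) : E ∈ t.V := by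
  obtain ⟨Xu, Yv, hX, hY, a, b, c, hT⟩ := t.exists_triangle (E⟦(-1:ℤ)⟧) (hSshift hE (-1))
  have ha : a = 0 := by
    apply (shiftFunctor C (1:ℤ)).map_injective
    rw [Functor.map_zero]
    apply (cancel_mono ((shiftFunctorCompIsoId C (-1:ℤ) 1 (by omega)).hom.app E)).1
    rw [zero_comp]
    exact h Xu hX _
  have hz : IsZero Xu := by
    obtain ⟨ψ, hψ⟩ := Triangle.coyoneda_exact₂ _ (inv_rot_of_distTriang _ hT) (𝟙 Xu)
      (by change 𝟙 Xu ≫ a = 0; rw [ha, comp_zero])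
    have hψ0 : ψ = 0 := aux5_homZ₆ t hX hY (by omega) ψ
    rw [IsZero.iff_id_eq_zero, hψ, hψ0]; exact zero_comp
  have : IsIso b := (Triangle.isZero₁_iff_isIso₂ _ hT).1 hz
  exact t.V_iso ((shiftFunctor C (1:ℤ)).mapIso (asIso b).symm ≪≫
    (shiftFunctorCompIsoId C (-1:ℤ) 1 (by omega)).app E) hY

lemma aux5_ext_U (T : Triangle C) (hT : T ∈ distTriang C) (h₁ : T.obj₁ ∈ t.U)
    (h₃ : T.obj₃ ∈ t.U) (h₂ : T.obj₂ ∈ S) : T.obj₂ ∈ t.U := by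
  refine aux5_mem_U t h₂ (fun Y hY g => ?_)
  obtain ⟨g', hg'⟩ := Triangle.yoneda_exact₂ T hT g (aux5_homZ₃ t h₁ hY _)
  rw [hg', aux5_homZ₃ t h₃ hY g', comp_zero]

lemma aux5_ext_heart (hSshift : ∀ ⦃X : C⦄, X ∈ S → ∀ m : ℤ, X⟦m⟧ ∈ S)
    (T : Triangle C) (hT : T ∈ distTriang C) (h₁ : T.obj₁ ∈ t.heartSet)
    (h₃ : T.obj₃ ∈ t.heartSet) (h₂ : T.obj₂ ∈ S) : T.obj₂ ∈ t.heartSet := by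
  refine ⟨aux5_ext_U t T hT h₁.1 h₃.1 h₂, aux5_mem_V t hSshift h₂ (fun X' hX' φ => ?_)⟩
  obtain ⟨ξ, hξ⟩ := Triangle.coyoneda_exact₂ T hT φ (t.hom_zero hX' h₃.2 _)
  rw [hξ, t.hom_zero hX' h₁.2 ξ, zero_comp]

lemma aux5_epi_cancel {P Q : t.Heart} (e : P ⟶ Q) (he : Epi e) {R : C}
    (hR : R ∈ t.heartSet) (g : Q.obj ⟶ R)
    (hg : e.hom ≫ g = 0) : g = 0 := by
  have hg' : e ≫ (ObjectProperty.homMk g : Q ⟶ (⟨R, hR⟩ : t.Heart)) = 0 := by ext; exact hg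
  simpa using congrArg (fun k => k.hom) (@zero_of_epi_comp t.Heart _ _ P Q ⟨R, hR⟩ e _ he hg')

lemma aux5_mono_cancel {Q R : t.Heart} (m : Q ⟶ R) (hm : Mono m) {P : C}
    (hP : P ∈ t.heartSet) (g : P ⟶ Q.obj)
    (hg : g ≫ m.hom = 0) : g = 0 := by
  have hg' : (ObjectProperty.homMk g : (⟨P, hP⟩ : t.Heart) ⟶ Q) ≫ m = 0 := by ext; exact hg
  simpa using congrArg (fun k => k.hom) (@zero_of_comp_mono t.Heart _ _ ⟨P, hP⟩ Q R _ m hm hg')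

theorem aux5_main
    (hSshift : ∀ ⦃X : C⦄, X ∈ S → ∀ m : ℤ, X⟦m⟧ ∈ S)
    (hScone : ∀ T : Triangle C, (T ∈ distTriang C) → T.obj₁ ∈ S → T.obj₂ ∈ S → T.obj₃ ∈ S)
    (X Y : t.Heart) (n : ℤ) (f : X.obj ⟶ Y.obj⟦n⟧) :
    ((∃ (Cq : t.Heart) (e : Cq ⟶ X), Epi e ∧ e.hom ≫ f = 0) ↔
      (∃ (A₁ : t.Heart) (p : X.obj ⟶ A₁.obj⟦(1 : ℤ)⟧) (q : A₁.obj⟦(1 : ℤ)⟧ ⟶ Y.obj⟦n⟧),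
        p ≫ q = f)) ∧
    ((∃ (Cq : t.Heart) (m : Y ⟶ Cq), Mono m ∧
        f ≫ m.hom⟦n⟧' = 0) ↔
      (∃ (A' : t.Heart) (p : X.obj ⟶ A'.obj⟦n - 1⟧) (q : A'.obj⟦n - 1⟧ ⟶ Y.obj⟦n⟧),
        p ≫ q = f)) := by
  constructor
  · constructor
    · -- (i) ⇒ : epi killing f gives factorization through A₁⟦1⟧
      rintro ⟨Cq, e, he, hef⟩
      obtain ⟨Z, v, w, hT⟩ :=
        Pretriangulated.distinguished_cocone_triangle e.hom
      have hZS : Z ∈ S := hScone _ hT (t.U_subset Cq.property.1) (t.U_subset X.property.1)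
      have hev : e.hom ≫ v = 0 := comp_distTriang_mor_zero₁₂ _ hT
      -- every map from Z to an object of the coaisle vanishes
      have claim : ∀ (W : C), W ∈ t.V → ∀ φ : Z ⟶ W, φ = 0 := by
        intro W hW φ
        obtain ⟨UW, W', hUW, hW', a', b', c', hTW⟩ := t.exists_triangle W (t.V_subset hW)
        have hUWheart : UW ∈ t.heartSet := by
          refine ⟨hUW, aux5_mem_V t hSshift (t.U_subset hUW) (fun X' hX' ψ => ?_)⟩
          obtain ⟨ξ, hξ⟩ := Triangle.coyoneda_exact₂ _ (inv_rot_of_distTriang _ hTW) ψ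
            (by change ψ ≫ a' = 0; exact t.hom_zero hX' hW _)
          rw [hξ, aux5_homZ₅ t hX' hW' (show (-1 : ℤ) ≤ 1 by omega) ξ]; exact zero_comp
        have hχ : φ ≫ b' = 0 := by
          obtain ⟨ξ, hξ⟩ := Triangle.yoneda_exact₂ _ (rot_of_distTriang _ hT) (φ ≫ b')
            (by change v ≫ φ ≫ b' = 0; exact aux5_homZ₃ t X.property.1 hW' _)
          refine hξ.trans ?_
          have hξ0 : ξ = 0 := aux5_homZ₃ t (t.U_shift Cq.property.1) hW' ξ
          rw [hξ0]; exact comp_zero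
        obtain ⟨φ', hφ'⟩ := Triangle.coyoneda_exact₂ _ hTW φ hχ
        -- φ' : Z ⟶ UW, φ = φ' ≫ a'
        have hh : v ≫ φ' = 0 := by
          refine aux5_epi_cancel t e he hUWheart (v ≫ φ') ?_
          exact (Category.assoc _ _ _).symm.trans ((congrArg (· ≫ φ') hev).trans zero_comp)
        obtain ⟨ξ₂, hξ₂⟩ := Triangle.yoneda_exact₂ _ (rot_of_distTriang _ hT) φ'
          (by change v ≫ φ' = 0; exact hh)
        have hξ₂0 : ξ₂ = 0 := t.hom_zero Cq.property.1 hUWheart.2 ξ₂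
        rw [hφ', hξ₂, hξ₂0, comp_zero]; exact zero_comp
      have εZ : Z⟦(-1:ℤ)⟧⟦(1:ℤ)⟧ ≅ Z := (shiftFunctorCompIsoId C (-1:ℤ) 1 (by omega)).app Z
      have hZV : Z⟦(-1:ℤ)⟧ ∈ t.V := by
        refine aux5_mem_V t hSshift (hSshift hZS (-1)) (fun X' hX' ψ => ?_)
        have hρ : ψ⟦(1:ℤ)⟧' ≫ εZ.hom = 0 := by
          have hρw : (ψ⟦(1:ℤ)⟧' ≫ εZ.hom) ≫ w = 0 := by
            have hpre : ((ψ⟦(1:ℤ)⟧' ≫ εZ.hom) ≫ w) =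
                ((shiftFunctor C (1:ℤ)).preimage ((ψ⟦(1:ℤ)⟧' ≫ εZ.hom) ≫ w))⟦(1:ℤ)⟧' :=
              ((shiftFunctor C (1:ℤ)).map_preimage _).symm
            have h0 : (shiftFunctor C (1:ℤ)).preimage ((ψ⟦(1:ℤ)⟧' ≫ εZ.hom) ≫ w) = 0 :=
              t.hom_zero hX' Cq.property.2 _
            rw [hpre, h0, Functor.map_zero]
          obtain ⟨ρ₁, hρ₁⟩ := Triangle.coyoneda_exact₂ _ (rot_of_distTriang _ hT)
            (ψ⟦(1:ℤ)⟧' ≫ εZ.hom) (by change (ψ⟦(1:ℤ)⟧' ≫ εZ.hom) ≫ w = 0; exact hρw)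
          have hρ₁0 : ρ₁ = 0 := t.hom_zero (t.U_shift hX') X.property.2 ρ₁
          refine hρ₁.trans ?_
          rw [hρ₁0]; exact zero_comp
        apply (shiftFunctor C (1:ℤ)).map_injective
        rw [Functor.map_zero]
        apply (cancel_mono εZ.hom).1
        rw [zero_comp]
        exact hρ
      have hZU : Z⟦(-1:ℤ)⟧ ∈ t.U := by
        refine aux5_mem_U t (hSshift hZS (-1)) (fun Y₀ hY₀ g => ?_)
        have h0 : εZ.inv ≫ g⟦(1:ℤ)⟧' = 0 := claim _ hY₀ _
        apply (shiftFunctor C (1:ℤ)).map_injective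
        rw [Functor.map_zero]
        apply (cancel_epi εZ.inv).1
        rw [comp_zero]
        exact h0
      obtain ⟨q₀, hq₀⟩ := Triangle.yoneda_exact₂ _ hT f hef
      have hq₀' : f = v ≫ q₀ := hq₀
      refine ⟨⟨Z⟦(-1:ℤ)⟧, hZU, hZV⟩, v ≫ εZ.inv, εZ.hom ≫ q₀, ?_⟩
      change (v ≫ εZ.inv) ≫ εZ.hom ≫ q₀ = f
      exact (Category.assoc _ _ _).trans ((congrArg (v ≫ ·) (εZ.inv_hom_id_assoc q₀)).trans hq₀'.symm)
    · -- (i) ⇐ : factorization gives epi killing f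
      rintro ⟨A₁, p, q, hpq⟩
      obtain ⟨W, a, b, hT⟩ := Pretriangulated.distinguished_cocone_triangle p
      have hT₁ : (Triangle.mk p a b).invRotate ∈ distTriang C := inv_rot_of_distTriang _ hT
      have hWS : W ∈ S :=
        hScone _ hT (t.U_subset X.property.1) (hSshift (t.U_subset A₁.property.1) 1)
      have hCS : W⟦(-1:ℤ)⟧ ∈ S := hSshift hWS (-1)
      have hCheart : W⟦(-1:ℤ)⟧ ∈ t.heartSet := by
        refine aux5_ext_heart t hSshift _ (inv_rot_of_distTriang _ hT₁) ?_ X.property hCS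
        exact aux5_heart_iso t
          ((shiftFunctorCompIsoId C (1:ℤ) (-1) (by omega)).symm.app A₁.obj) A₁.property
      refine ⟨⟨W⟦(-1:ℤ)⟧, hCheart⟩, ObjectProperty.homMk (Triangle.mk p a b).invRotate.mor₁, ⟨?_, ?_⟩⟩
      · refine ⟨fun {Z} g h rel => ?_⟩
        have hd : (Triangle.mk p a b).invRotate.mor₁ ≫ (g.hom - h.hom) = 0 := by
          exact (Preadditive.comp_sub _ _ _).trans (sub_eq_zero.2 (congrArg (fun k => k.hom) rel))
        obtain ⟨ψ, hψ⟩ := Triangle.yoneda_exact₂ _ hT₁ _ hd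
        have hψ' : g.hom - h.hom = p ≫ ψ := hψ
        have hψ0 : ψ = 0 := t.hom_zero A₁.property.1 Z.property.2 ψ
        have : g.hom - h.hom = 0 := by rw [hψ', hψ0]; exact comp_zero
        exact ObjectProperty.hom_ext _ (sub_eq_zero.1 this)
      · have h12 : (Triangle.mk p a b).invRotate.mor₁ ≫ p = 0 :=
          comp_distTriang_mor_zero₁₂ _ hT₁
        change (Triangle.mk p a b).invRotate.mor₁ ≫ f = 0
        rw [← hpq]; exact (Category.assoc _ _ _).symm.trans ((congrArg (· ≫ q) h12).trans zero_comp)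
  · constructor
    · -- (ii) ⇒ : mono killing f gives factorization through A'⟦n-1⟧
      rintro ⟨Cq, m, hm, hmf⟩
      obtain ⟨Q, v, u, hT⟩ :=
        Pretriangulated.distinguished_cocone_triangle m.hom
      have hQS : Q ∈ S := hScone _ hT (t.U_subset Y.property.1) (t.U_subset Cq.property.1)
      have hQU : Q ∈ t.U := aux5_ext_U t _ (rot_of_distTriang _ hT) Cq.property.1
        (t.U_shift Y.property.1) hQS
      have hu1 : u ≫ m.hom⟦(1:ℤ)⟧' = 0 :=
        comp_distTriang_mor_zero₃₁ _ hT
      have hQV : Q ∈ t.V := by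
        refine aux5_mem_V t hSshift hQS (fun X' hX' φ => ?_)
        obtain ⟨U₁, H₀, hU₁, hH₀, a, b, c, hT₁⟩ :=
          t.exists_triangle (X'⟦(-1:ℤ)⟧) (hSshift (t.U_subset hX') (-1))
        have hHU : H₀⟦(1:ℤ)⟧ ∈ t.U := by
          refine aux5_mem_U t (t.V_subset hH₀) (fun Y₀ hY₀ g => ?_)
          have hTs := Triangle.shift_distinguished _ hT₁ 1
          have hall : ∀ gg : X'⟦(-1:ℤ)⟧⟦(1:ℤ)⟧ ⟶ Y₀, gg = 0 := by
            intro gg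
            apply (cancel_epi ((shiftFunctorCompIsoId C (-1:ℤ) 1 (by omega)).inv.app X')).1
            rw [comp_zero]
            exact aux5_homZ₃ t hX' hY₀ _
          obtain ⟨ψ, hψ⟩ := Triangle.yoneda_exact₂ _ (rot_of_distTriang _ hTs) g (hall _)
          have hψ0 : ψ = 0 := aux5_homZ₃ t (t.U_shift (t.U_shift hU₁)) hY₀ ψ
          rw [hψ, hψ0]; exact comp_zero
        have hHheart : H₀⟦(1:ℤ)⟧ ∈ t.heartSet := ⟨hHU, hH₀⟩
        have hT₂ := Triangle.shift_distinguished _ hT₁ 2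
        have δ : X'⟦(1:ℤ)⟧ ≅ X'⟦(-1:ℤ)⟧⟦(2:ℤ)⟧ :=
          (shiftFunctorAdd' C (-1:ℤ) 2 1 (by omega)).app X'
        have hU2 : ∀ ρ : U₁⟦(2:ℤ)⟧ ⟶ Q, ρ = 0 := by
          intro ρ
          have h1 : ρ ≫ u = 0 := aux5_homZ t hU₁ Y.property.2 (show (1:ℤ) < 2 by omega) _
          obtain ⟨ξ, hξ⟩ := Triangle.coyoneda_exact₃ _ hT ρ h1
          have hξ0 : ξ = 0 := aux5_homZ₁ t hU₁ Cq.property.2 (show (0:ℤ) < 2 by omega) ξ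
          rw [hξ, hξ0]; exact zero_comp
        obtain ⟨φ₃, hφ₃⟩ := Triangle.yoneda_exact₂ _ hT₂ (δ.inv ≫ φ) (hU2 _)
        have τ : H₀⟦(2:ℤ)⟧ ≅ H₀⟦(1:ℤ)⟧⟦(1:ℤ)⟧ := (shiftFunctorAdd' C 1 1 2 (by omega)).app H₀
        have hψ₀ : (τ.inv ≫ φ₃) ≫ u = 0 := by
          have hψm : (shiftFunctor C (1:ℤ)).preimage ((τ.inv ≫ φ₃) ≫ u) ≫
              m.hom = 0 := by
            apply (shiftFunctor C (1:ℤ)).map_injective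
            rw [Functor.map_comp, Functor.map_zero, Functor.map_preimage, Category.assoc,
              hu1, comp_zero]
          have hψ0 : (shiftFunctor C (1:ℤ)).preimage ((τ.inv ≫ φ₃) ≫ u) = 0 :=
            aux5_mono_cancel t m hm hHheart _ hψm
          rw [← (shiftFunctor C (1:ℤ)).map_preimage ((τ.inv ≫ φ₃) ≫ u), hψ0, Functor.map_zero]
        obtain ⟨ξ', hξ'⟩ := Triangle.coyoneda_exact₃ _ hT (τ.inv ≫ φ₃) hψ₀
        have hξ'0 : ξ' = 0 := t.hom_zero hHU Cq.property.2 ξ'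
        have hφ₄ : τ.inv ≫ φ₃ = 0 := by refine hξ'.trans ?_; rw [hξ'0]; exact zero_comp
        have hφ₃0 : φ₃ = 0 := by
          apply (cancel_epi τ.inv).1
          exact hφ₄.trans comp_zero.symm
        have hδφ : δ.inv ≫ φ = 0 := by refine hφ₃.trans ?_; rw [hφ₃0]; exact comp_zero
        apply (cancel_epi δ.inv).1
        rw [comp_zero]
        exact hδφ
      -- factor f through Q⟦n-1⟧
      have hTn := Triangle.shift_distinguished _ hT n
      have hTn' := inv_rot_of_distTriang _ hTn
      have hf0 : f ≫ ((CategoryTheory.shiftFunctor (Triangle C) n).obj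
          (Triangle.mk m.hom v u)).invRotate.mor₂ = 0 := by
        change f ≫ (n.negOnePow • m.hom⟦n⟧') = 0
        rw [Units.smul_def, Preadditive.comp_zsmul, hmf, smul_zero]
      obtain ⟨p₁, hp₁⟩ := Triangle.coyoneda_exact₂ _ hTn' f hf0
      have κ : Q⟦n - 1⟧ ≅ Q⟦n⟧⟦(-1:ℤ)⟧ := (shiftFunctorAdd' C n (-1:ℤ) (n - 1) (by omega)).app Q
      refine ⟨⟨Q, hQU, hQV⟩, p₁ ≫ κ.inv,
        κ.hom ≫ ((CategoryTheory.shiftFunctor (Triangle C) n).obj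
          (Triangle.mk m.hom v u)).invRotate.mor₁, ?_⟩
      exact (Category.assoc _ _ _).trans ((congrArg (p₁ ≫ ·) (κ.inv_hom_id_assoc _)).trans hp₁.symm)
    · -- (ii) ⇐ : factorization gives mono killing f
      rintro ⟨A', p, q, hpq⟩
      have ι := shiftFunctorAdd' C (1:ℤ) (n - 1) n (by omega)
      have hq' : ((shiftFunctor C (n - 1)).preimage (q ≫ ι.hom.app Y.obj))⟦(n - 1 : ℤ)⟧' =
          q ≫ ι.hom.app Y.obj := (shiftFunctor C (n - 1)).map_preimage _
      set q' : A'.obj ⟶ Y.obj⟦(1:ℤ)⟧ :=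
        (shiftFunctor C (n - 1)).preimage (q ≫ ι.hom.app Y.obj) with hq'def
      set θ : shiftFunctor C (1:ℤ) ⋙ shiftFunctor C (-1:ℤ) ≅ 𝟭 C :=
        shiftFunctorCompIsoId C (1:ℤ) (-1:ℤ) (by omega) with hθeq
      set ν : shiftFunctor C (-1:ℤ) ⋙ shiftFunctor C (1:ℤ) ≅ 𝟭 C :=
        shiftFunctorCompIsoId C (-1:ℤ) (1:ℤ) (by omega) with hνeq
      obtain ⟨Cc, m₀, u, hT⟩ :=
        Pretriangulated.distinguished_cocone_triangle (q'⟦(-1:ℤ)⟧' ≫ θ.hom.app Y.obj)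
      have hwm : (q'⟦(-1:ℤ)⟧' ≫ θ.hom.app Y.obj) ≫ m₀ = 0 := comp_distTriang_mor_zero₁₂ _ hT
      have hCS : Cc ∈ S := hScone _ hT (hSshift (t.U_subset A'.property.1) (-1))
        (t.U_subset Y.property.1)
      have hCheart : Cc ∈ t.heartSet := by
        refine aux5_ext_heart t hSshift _ (rot_of_distTriang _ hT) Y.property ?_ hCS
        exact aux5_heart_iso t (ν.symm.app A'.obj) A'.property
      have hq'm : q' ≫ m₀⟦(1:ℤ)⟧' = 0 := by
        have hw1 : (q'⟦(-1:ℤ)⟧' ≫ θ.hom.app Y.obj)⟦(1:ℤ)⟧' ≫ m₀⟦(1:ℤ)⟧' = 0 := by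
          rw [← Functor.map_comp, hwm, Functor.map_zero]
        have hnat : ν.hom.app A'.obj ≫ q' =
            q'⟦(-1:ℤ)⟧'⟦(1:ℤ)⟧' ≫ ν.hom.app (Y.obj⟦(1:ℤ)⟧) := (ν.hom.naturality q').symm
        have hθν : (θ.hom.app Y.obj)⟦(1:ℤ)⟧' = ν.hom.app (Y.obj⟦(1:ℤ)⟧) := by
          rw [hθeq, hνeq]
          exact shift_shiftFunctorCompIsoId_hom_app (1:ℤ) (-1:ℤ) (by omega) Y.obj
        have h1 : ν.hom.app A'.obj ≫ q' ≫ m₀⟦(1:ℤ)⟧' = 0 := by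
          rw [← Category.assoc, hnat, Category.assoc, ← hθν, ← Functor.map_comp_assoc, hw1]
        apply (cancel_epi (ν.hom.app A'.obj)).1
        rw [comp_zero]
        exact h1
      have hqm : q ≫ m₀⟦(n:ℤ)⟧' = 0 := by
        apply (cancel_mono (ι.hom.app Cc)).1
        rw [zero_comp, Category.assoc]
        have hnatι : m₀⟦n⟧' ≫ ι.hom.app Cc =
            ι.hom.app Y.obj ≫ (m₀⟦(1:ℤ)⟧')⟦(n - 1 : ℤ)⟧' := ι.hom.naturality m₀
        rw [hnatι, ← Category.assoc, ← hq', ← Functor.map_comp, hq'm, Functor.map_zero]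
      refine ⟨⟨Cc, hCheart⟩, ObjectProperty.homMk m₀, ⟨?_, ?_⟩⟩
      · refine ⟨fun {Z} g h rel => ?_⟩
        have hd : (g.hom - h.hom) ≫ m₀ = 0 := by
          exact (Preadditive.sub_comp _ _ _).trans (sub_eq_zero.2 (congrArg (fun k => k.hom) rel))
        obtain ⟨ξ, hξ⟩ := Triangle.coyoneda_exact₂ _ hT _ hd
        have hξ0 : ξ = 0 := aux5_homZ₂ t Z.property.1 A'.property.2 (by omega) ξ
        have : g.hom - h.hom = 0 := by rw [hξ, hξ0]; exact zero_comp
        exact ObjectProperty.hom_ext _ (sub_eq_zero.1 this)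
      · change f ≫ m₀⟦n⟧' = 0
        rw [← hpq, Category.assoc, hqm, comp_zero]

lemma aux5_bdd_cone (A : Type u) [Category.{v} A] [Abelian A] [HasDerivedCategory.{w} A]
    (T : Triangle (DerivedCategory A)) (hT : T ∈ distTriang (DerivedCategory A))
    (h₁ : T.obj₁ ∈ Bdd A) (h₂ : T.obj₂ ∈ Bdd A) : T.obj₃ ∈ Bdd A := by
  obtain ⟨a₁, b₁, H₁⟩ := h₁
  obtain ⟨a₂, b₂, H₂⟩ := h₂
  refine ⟨min a₂ (a₁ - 1), max b₂ (b₁ - 1), fun n hn => ?_⟩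
  have ex := (DerivedCategory.homologyFunctor A n).map_distinguished_exact _
    (rot_of_distTriang _ hT)
  have hz1 : IsZero ((DerivedCategory.homologyFunctor A n).obj (T.obj₁⟦(1:ℤ)⟧)) :=
    IsZero.of_iso (H₁ (1 + n) (by omega))
      (((DerivedCategory.homologyFunctor A 0).shiftIso 1 n (1 + n) rfl).app T.obj₁)
  exact ex.isZero_of_both_zeros (IsZero.eq_of_src (H₂ n (by omega)) _ _)
    (IsZero.eq_of_tgt hz1 _ _)

end Statement5Aux


open Paper in
/-- For `A, B` in the heart of a t-structure on `D^b(A)` and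
`f : A → B[n]` with `n ≥ 2`: (i) there is an epimorphism `C → A` in the heart killing `f`
iff `f` factors through some `A₁[1]` with `A₁` in the heart; and (ii) there is a
monomorphism `B → C` in the heart killing `f` iff `f` factors through some
`A_{n-1}[n-1]` with `A_{n-1}` in the heart. -/
theorem epi_mono_killing_iff_factorization
    (A : Type u) [Category.{v} A] [Abelian A] [HasDerivedCategory.{w} A]
    (t : TStructureOn (DerivedCategory A) (Bdd A))
    (X Y : t.Heart) (n : ℤ) (hn : 2 ≤ n) (f : X.obj ⟶ Y.obj⟦n⟧) :
    ((∃ (C : t.Heart) (e : C ⟶ X), Epi e ∧ e.hom ≫ f = 0) ↔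
      (∃ (A₁ : t.Heart) (p : X.obj ⟶ A₁.obj⟦(1 : ℤ)⟧) (q : A₁.obj⟦(1 : ℤ)⟧ ⟶ Y.obj⟦n⟧),
        p ≫ q = f)) ∧
    ((∃ (C : t.Heart) (m : Y ⟶ C), Mono m ∧
        f ≫ m.hom⟦n⟧' = 0) ↔
      (∃ (A' : t.Heart) (p : X.obj ⟶ A'.obj⟦n - 1⟧) (q : A'.obj⟦n - 1⟧ ⟶ Y.obj⟦n⟧),
        p ≫ q = f)) := by
  exact aux5_main t (fun X hX m => shift_mem_Bdd A hX m)
    (fun T hT h1 h2 => aux5_bdd_cone A T hT h1 h2) X Y n f
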